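/- Existence and uniqueness for the interface initial value problem: let μ = Σ_{n} β_n δ_{t_n} be an atomic measure on ℝ with strictly increasing atoms (t_n) whose consecutive gaps are at least γ > 0 and weights β_n = (√b_n + 1)/(√b_n − 1), b_n > 1. Let z ∈ ℂ, let a ∈ ℝ ∖ {t_n : n}, and let c₀, c₁ ∈ ℂ. Then there exists exactly one solution u of the interface equation −u'' = z u for μ on [a, ∞) with u(a) = c₀ and u'(a) = c₁. -/

import Mathlib

open Set Filter Topology MeasureTheory

/-- The part of the interval `J` off the atoms `{tₙ}`. -/
def offAtoms (ts : ℕ → ℝ) (J : Set ℝ) : Set ℝ := J \ Set.range ts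

/-- One-sided limits of `u` and its derivative exist at the atom `ts n`, and the
interface conditions `u(tₙ+) = √bₙ · u(tₙ-)`, `u'(tₙ+) = u'(tₙ-)/√bₙ` hold. -/
def InterfaceAt (ts bs : ℕ → ℝ) (S : Set ℝ) (u : ℝ → ℂ) (n : ℕ) : Prop :=
  ∃ uL uR duL duR : ℂ,
    Tendsto u (nhdsWithin (ts n) (S ∩ Iio (ts n))) (nhds uL) ∧
    Tendsto u (nhdsWithin (ts n) (S ∩ Ioi (ts n))) (nhds uR) ∧
    Tendsto (derivWithin u S) (nhdsWithin (ts n) (S ∩ Iio (ts n))) (nhds duL) ∧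
    Tendsto (derivWithin u S) (nhdsWithin (ts n) (S ∩ Ioi (ts n))) (nhds duR) ∧
    uR = (Real.sqrt (bs n) : ℂ) * uL ∧
    duR = duL / (Real.sqrt (bs n) : ℂ)

/-- `u` is a solution of the interface equation `-u'' = z·u` for the atomic measure
with atoms `ts n` and branching numbers `bs n`, on the interval `J`:
`u` is twice continuously differentiable on `J` off the atoms with `-u'' = z·u` there,
and at every atom in the interior of `J` it has one-sided limits satisfying
the interface conditions. -/
def IsInterfaceSolution (ts bs : ℕ → ℝ) (z : ℂ) (J : Set ℝ) (u : ℝ → ℂ) : Prop :=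
  ContDiffOn ℝ 2 u (offAtoms ts J) ∧
  (∀ x ∈ offAtoms ts J,
      -(derivWithin (derivWithin u (offAtoms ts J)) (offAtoms ts J) x) = z * u x) ∧
  (∀ n, ts n ∈ interior J → InterfaceAt ts bs (offAtoms ts J) u n)

/-- The Wronskian `W(f, g)(r) = f'(r)·g(r) - f(r)·g'(r)`, with derivatives taken
within the set `S`. -/
noncomputable def wron (S : Set ℝ) (f g : ℝ → ℂ) (r : ℝ) : ℂ :=
  derivWithin f S r * g r - f r * derivWithin g S r

/-- The Wronskian `W(f, ḡ)(r)` of `f` and the pointwise complex conjugate of `g`. -/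
noncomputable def wronConj (S : Set ℝ) (f g : ℝ → ℂ) (r : ℝ) : ℂ :=
  derivWithin f S r * (starRingEnd ℂ) (g r)
    - f r * (starRingEnd ℂ) (derivWithin g S r)

namespace InterfaceIVP

noncomputable def w (z : ℂ) : ℂ := z ^ ((2 : ℂ)⁻¹)

lemma w_mul_self (z : ℂ) : w z * w z = z := by
  by_cases hz : z = 0
  · subst hz
    simp [w, Complex.zero_cpow (by norm_num : ((2:ℂ)⁻¹) ≠ 0)]
  · rw [w, ← Complex.cpow_add _ _ hz]
    norm_num

lemma w_zero : w 0 = 0 := by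
  simp [w, Complex.zero_cpow (by norm_num : ((2:ℂ)⁻¹) ≠ 0)]

noncomputable def cs (z : ℂ) (t : ℝ) : ℂ := Complex.cos (w z * t)
noncomputable def cs' (z : ℂ) (t : ℝ) : ℂ := -(w z * Complex.sin (w z * t))
noncomputable def sn (z : ℂ) (t : ℝ) : ℂ :=
  if z = 0 then (t : ℂ) else Complex.sin (w z * t) / w z

lemma hasDerivAt_comul (c : ℂ) (t : ℝ) : HasDerivAt (fun s : ℝ => c * (s : ℂ)) c t := by
  simpa using (Complex.ofRealCLM.hasDerivAt (x := t)).const_mul c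

lemma hasDerivAt_cs (z : ℂ) (t : ℝ) : HasDerivAt (cs z) (cs' z t) t := by
  have h := (Complex.hasDerivAt_cos (w z * t)).scomp t (hasDerivAt_comul (w z) t)
  have h2 : HasDerivAt (cs z) (w z • -Complex.sin (w z * t)) t := h
  simpa [cs', smul_eq_mul, mul_comm] using h2

lemma w_ne_zero {z : ℂ} (hz : z ≠ 0) : w z ≠ 0 :=
  fun h0 => hz (by rw [← w_mul_self z, h0, zero_mul])

lemma hasDerivAt_sn (z : ℂ) (t : ℝ) : HasDerivAt (sn z) (cs z t) t := by
  by_cases hz : z = 0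
  · subst hz
    have h : HasDerivAt (fun s : ℝ => (s : ℂ)) 1 t := by
      have := Complex.ofRealCLM.hasDerivAt (x := t); exact this
    have e : sn 0 = fun s : ℝ => (s : ℂ) := by funext s; simp [sn]
    have h3 : cs 0 t = 1 := by simp [cs, w_zero]
    rw [e, h3]; exact h
  · have e : sn z = fun s : ℝ => Complex.sin (w z * s) / w z := by
      funext s; simp [sn, hz]
    have h := ((Complex.hasDerivAt_sin (w z * t)).scomp t (hasDerivAt_comul (w z) t)).div_const (w z)
    have hw := w_ne_zero hz
    have h3 : w z • Complex.cos (w z * t) / w z = cs z t := by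
      rw [smul_eq_mul, mul_comm, mul_div_assoc, div_self hw, mul_one]; rfl
    rw [e, ← h3]; exact h

lemma hasDerivAt_cs' (z : ℂ) (t : ℝ) : HasDerivAt (cs' z) (-z * cs z t) t := by
  have h := (((Complex.hasDerivAt_sin (w z * t)).scomp t (hasDerivAt_comul (w z) t)).const_mul (w z)).neg
  have h2 : HasDerivAt (cs' z) (-(w z * (w z • Complex.cos (w z * t)))) t := h
  have h3 : -(w z * (w z • Complex.cos (w z * t))) = -z * cs z t := by
    rw [smul_eq_mul, cs]
    set W := w z with hW
    have hzW : W * W = z := w_mul_self z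
    rw [← hzW]; ring
  rw [← h3]; exact h2

lemma cs'_eq (z : ℂ) (t : ℝ) : cs' z t = -z * sn z t := by
  by_cases hz : z = 0
  · simp [cs', sn, hz, w_zero]
  · have e : sn z t = Complex.sin (w z * t) / w z := by simp [sn, hz]
    rw [cs', e]
    have hw := w_ne_zero hz
    set W := w z with hW
    have hzW : W * W = z := w_mul_self z
    rw [← hzW]
    field_simp

lemma cs_zero (z : ℂ) : cs z 0 = 1 := by simp [cs]
lemma sn_zero (z : ℂ) : sn z 0 = 0 := by by_cases hz : z = 0 <;> simp [sn, hz]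
lemma cs'_zero (z : ℂ) : cs' z 0 = 0 := by simp [cs']

noncomputable def sol (z : ℂ) (p : ℝ) (d : ℂ × ℂ) (x : ℝ) : ℂ :=
  d.1 * cs z (x - p) + d.2 * sn z (x - p)

noncomputable def sol' (z : ℂ) (p : ℝ) (d : ℂ × ℂ) (x : ℝ) : ℂ :=
  d.1 * cs' z (x - p) + d.2 * cs z (x - p)

lemma sol_at (z : ℂ) (p : ℝ) (d : ℂ × ℂ) : sol z p d p = d.1 := by
  simp [sol, sub_self, cs_zero, sn_zero]

lemma sol'_at (z : ℂ) (p : ℝ) (d : ℂ × ℂ) : sol' z p d p = d.2 := by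
  simp [sol', sub_self, cs_zero, cs'_zero]

lemma hasDerivAt_sol (z : ℂ) (p : ℝ) (d : ℂ × ℂ) (x : ℝ) :
    HasDerivAt (sol z p d) (sol' z p d x) x := by
  have h1 : HasDerivAt (fun y : ℝ => y - p) 1 x := (hasDerivAt_id x).sub_const p
  have hcs : HasDerivAt (fun y : ℝ => cs z (y - p)) (cs' z (x - p)) x := by
    simpa [Function.comp_def] using (hasDerivAt_cs z (x - p)).scomp x h1
  have hsn : HasDerivAt (fun y : ℝ => sn z (y - p)) (cs z (x - p)) x := by
    simpa [Function.comp_def] using (hasDerivAt_sn z (x - p)).scomp x h1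
  exact (hcs.const_mul d.1).add (hsn.const_mul d.2)

lemma hasDerivAt_sol' (z : ℂ) (p : ℝ) (d : ℂ × ℂ) (x : ℝ) :
    HasDerivAt (sol' z p d) (-z * sol z p d x) x := by
  have h1 : HasDerivAt (fun y : ℝ => y - p) 1 x := (hasDerivAt_id x).sub_const p
  have hcs' : HasDerivAt (fun y : ℝ => cs' z (y - p)) (-z * cs z (x - p)) x := by
    simpa [Function.comp_def] using (hasDerivAt_cs' z (x - p)).scomp x h1
  have hcs : HasDerivAt (fun y : ℝ => cs z (y - p)) (cs' z (x - p)) x := by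
    simpa [Function.comp_def] using (hasDerivAt_cs z (x - p)).scomp x h1
  have h := (hcs'.const_mul d.1).add (hcs.const_mul d.2)
  have h3 : d.1 * (-z * cs z (x - p)) + d.2 * cs' z (x - p) = -z * sol z p d x := by
    rw [cs'_eq, sol]; ring
  rw [← h3]
  exact h

lemma contDiff_cs (z : ℂ) : ContDiff ℝ 2 (cs z) :=
  (Complex.contDiff_cos.restrict_scalars ℝ).comp
    (contDiff_const.mul Complex.ofRealCLM.contDiff)

lemma contDiff_cs' (z : ℂ) : ContDiff ℝ 2 (cs' z) :=
  ((contDiff_const.mul ((Complex.contDiff_sin.restrict_scalars ℝ).comp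
    (contDiff_const.mul Complex.ofRealCLM.contDiff))).neg)

lemma contDiff_sn (z : ℂ) : ContDiff ℝ 2 (sn z) := by
  by_cases hz : z = 0
  · have e : sn z = fun s : ℝ => (s : ℂ) := by funext s; simp [sn, hz]
    rw [e]
    exact Complex.ofRealCLM.contDiff
  · have e : sn z = fun s : ℝ => Complex.sin (w z * s) / w z := by
      funext s; simp [sn, hz]
    rw [e]
    exact ((Complex.contDiff_sin.restrict_scalars ℝ).comp
      (contDiff_const.mul Complex.ofRealCLM.contDiff)).div_const _

lemma contDiff_sol (z : ℂ) (p : ℝ) (d : ℂ × ℂ) : ContDiff ℝ 2 (sol z p d) := by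
  have hsub : ContDiff ℝ 2 (fun y : ℝ => y - p) := contDiff_id.sub contDiff_const
  exact (contDiff_const.mul ((contDiff_cs z).comp hsub)).add
    (contDiff_const.mul ((contDiff_sn z).comp hsub))

lemma contDiff_sol' (z : ℂ) (p : ℝ) (d : ℂ × ℂ) : ContDiff ℝ 2 (sol' z p d) := by
  have hsub : ContDiff ℝ 2 (fun y : ℝ => y - p) := contDiff_id.sub contDiff_const
  exact (contDiff_const.mul ((contDiff_cs' z).comp hsub)).add
    (contDiff_const.mul ((contDiff_cs z).comp hsub))

def Amap (z : ℂ) (y : ℂ × ℂ) : ℂ × ℂ := (y.2, -z * y.1)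

lemma Amap_sub (z : ℂ) (y y' : ℂ × ℂ) : Amap z y - Amap z y' = Amap z (y - y') := by
  simp only [Amap, Prod.mk_sub_mk, Prod.fst_sub, Prod.snd_sub]
  rw [Prod.mk.injEq]
  exact ⟨rfl, by ring⟩

lemma norm_Amap_le (z : ℂ) (y : ℂ × ℂ) : ‖Amap z y‖ ≤ max 1 ‖z‖ * ‖y‖ := by
  have h0 : (0:ℝ) ≤ ‖y‖ := norm_nonneg _
  rw [Amap, Prod.norm_def]
  apply max_le
  · exact le_trans (norm_snd_le y) (le_mul_of_one_le_left h0 (le_max_left _ _))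
  · rw [norm_mul, norm_neg]
    exact mul_le_mul (le_max_right _ _) (norm_fst_le y) (norm_nonneg _)
      (le_trans zero_le_one (le_max_left _ _))

lemma gronwall_aux {z : ℂ} {h : ℝ → ℂ × ℂ} {p x : ℝ} (hpx : p < x)
    (hc : ContinuousOn h (Icc p x))
    (hd : ∀ t ∈ Ico p x, HasDerivWithinAt h (Amap z (h t)) (Ici t) t)
    {δ : ℝ} (h0 : ‖h p‖ ≤ δ) :
    ‖h x‖ ≤ δ * Real.exp (max 1 ‖z‖ * (x - p)) := by
  have := norm_le_gronwallBound_of_norm_deriv_right_le (K := max 1 ‖z‖) (ε := 0) hc hd h0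
      (fun t _ => by simpa using norm_Amap_le z (h t)) x (right_mem_Icc.2 hpx.le)
  rwa [gronwallBound_ε0] at this

lemma eq_zero_of_ivp_zero {z : ℂ} {h : ℝ → ℂ × ℂ} {p q : ℝ}
    (hd0 : HasDerivWithinAt h (Amap z (h p)) (Ici p) p)
    (hd : ∀ t ∈ Ioo p q, HasDerivAt h (Amap z (h t)) t)
    (h0 : h p = 0) : ∀ x ∈ Ico p q, h x = 0 := by
  rintro x ⟨hpx, hxq⟩
  rcases eq_or_lt_of_le hpx with rfl | hpx
  · exact h0
  have hc : ContinuousOn h (Icc p x) := by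
    intro t ht
    rcases eq_or_lt_of_le ht.1 with rfl | hpt
    · exact hd0.continuousWithinAt.mono (fun y hy => hy.1)
    · exact ((hd t ⟨hpt, lt_of_le_of_lt ht.2 hxq⟩).continuousAt).continuousWithinAt
  have hder : ∀ t ∈ Ico p x, HasDerivWithinAt h (Amap z (h t)) (Ici t) t := by
    rintro t ⟨hpt, htx⟩
    rcases eq_or_lt_of_le hpt with rfl | hpt
    · exact hd0
    · exact (hd t ⟨hpt, htx.trans hxq⟩).hasDerivWithinAt
  have hb := gronwall_aux hpx hc hder (δ := 0) (by simp [h0])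
  have h1 : ‖h x‖ ≤ 0 := by simpa using hb
  exact norm_le_zero_iff.1 h1

lemma eq_zero_of_limit_zero {z : ℂ} {h : ℝ → ℂ × ℂ} {p q : ℝ} (hpq : p < q)
    (hd : ∀ t ∈ Ioo p q, HasDerivAt h (Amap z (h t)) t)
    (h0 : Tendsto h (𝓝[Ioo p q] p) (𝓝 0)) : ∀ x ∈ Ioo p q, h x = 0 := by
  intro x hx
  set C := Real.exp (max 1 ‖z‖ * (x - p)) with hC
  have hCpos : 0 < C := Real.exp_pos _
  have key : ∀ ε : ℝ, 0 < ε → ‖h x‖ ≤ ε := by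
    intro ε hε
    have hev : ∀ᶠ y in 𝓝[Ioo p q] p, ‖h y‖ < ε / C :=
      (NormedAddCommGroup.tendsto_nhds_zero.mp h0) (ε / C) (div_pos hε hCpos)
    have hmem : Ioo p x ∈ 𝓝[Ioo p q] p :=
      mem_nhdsWithin.2 ⟨Iio x, isOpen_Iio, hx.1, fun y hy => ⟨hy.2.1, hy.1⟩⟩
    haveI hne : (𝓝[Ioo p q] p).NeBot := by
      rw [← mem_closure_iff_nhdsWithin_neBot, closure_Ioo hpq.ne]
      exact ⟨le_refl p, hpq.le⟩
    obtain ⟨p', hp1, hp2⟩ := (hev.and (eventually_mem_set.2 hmem)).exists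
    -- hp1 : ‖h p'‖ < ε / C, hp2 : p' ∈ Ioo p x
    have hc : ContinuousOn h (Icc p' x) := fun t ht =>
      ((hd t ⟨lt_of_lt_of_le hp2.1 ht.1, lt_of_le_of_lt ht.2 hx.2⟩).continuousAt).continuousWithinAt
    have hder : ∀ t ∈ Ico p' x, HasDerivWithinAt h (Amap z (h t)) (Ici t) t := fun t ht =>
      (hd t ⟨lt_of_lt_of_le hp2.1 ht.1, lt_trans ht.2 hx.2⟩).hasDerivWithinAt
    have hb := gronwall_aux hp2.2 hc hder hp1.le
    have hKnn : (0:ℝ) ≤ max 1 ‖z‖ := le_trans zero_le_one (le_max_left _ _)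
    calc ‖h x‖ ≤ ε / C * Real.exp (max 1 ‖z‖ * (x - p')) := hb
      _ ≤ ε / C * C := by
          apply mul_le_mul_of_nonneg_left _ (le_of_lt (div_pos hε hCpos))
          rw [hC]
          exact Real.exp_le_exp.2 (mul_le_mul_of_nonneg_left (by linarith [hp2.1]) hKnn)
      _ = ε := div_mul_cancel₀ ε hCpos.ne'
  have hle : ‖h x‖ ≤ 0 := by
    by_contra hlt
    push_neg at hlt
    have := key (‖h x‖ / 2) (by positivity)
    linarith
  exact norm_le_zero_iff.1 hle

structure Setup : Type where
  ts : ℕ → ℝ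
  bs : ℕ → ℝ
  γ : ℝ
  z : ℂ
  a : ℝ
  c₀ : ℂ
  c₁ : ℂ
  hγ : 0 < γ
  mono : StrictMono ts
  hgap : ∀ n, γ ≤ ts (n + 1) - ts n
  ha : a ∉ Set.range ts

variable (P : Setup)

lemma Setup.unbounded (x : ℝ) : ∃ n, x < P.ts n := by
  obtain ⟨n, hn⟩ := exists_nat_gt ((x - P.ts 0) / P.γ)
  refine ⟨n, ?_⟩
  have key : ∀ m : ℕ, P.ts 0 + m * P.γ ≤ P.ts m := by
    intro m
    induction m with
    | zero => simp
    | succ m ih =>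
        have h1 := P.hgap m
        have h2 : ((m + 1 : ℕ) : ℝ) = (m : ℝ) + 1 := by push_cast; ring
        rw [h2]
        nlinarith
  have h2 : x - P.ts 0 < n * P.γ := by
    rw [div_lt_iff₀ P.hγ] at hn
    linarith
  have := key n
  linarith

noncomputable def Setup.idx (x : ℝ) : ℕ :=
  @Nat.find (fun n => x < P.ts n) (Classical.decPred _) (P.unbounded x)

lemma Setup.lt_ts_idx (x : ℝ) : x < P.ts (P.idx x) :=
  @Nat.find_spec (fun n => x < P.ts n) (Classical.decPred _) (P.unbounded x)

lemma Setup.ts_le_of_lt_idx {x : ℝ} {m : ℕ} (h : m < P.idx x) : P.ts m ≤ x :=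
  not_lt.1 (@Nat.find_min (fun n => x < P.ts n) (Classical.decPred _) (P.unbounded x) m h)

lemma Setup.idx_eq {x : ℝ} {m : ℕ} (h1 : x < P.ts m) (h2 : ∀ j, j < m → P.ts j ≤ x) :
    P.idx x = m := by
  refine le_antisymm (@Nat.find_le _ _ (Classical.decPred _) (P.unbounded x) h1) ?_
  by_contra hlt
  push_neg at hlt
  exact absurd (h2 _ hlt) (not_le.2 (P.lt_ts_idx x))

noncomputable def Setup.n₀ : ℕ := P.idx P.a

lemma Setup.a_lt_iff (n : ℕ) : P.a < P.ts n ↔ P.n₀ ≤ n := by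
  constructor
  · intro h
    by_contra hlt
    push_neg at hlt
    exact absurd (P.ts_le_of_lt_idx hlt) (not_le.2 h)
  · intro h
    exact lt_of_lt_of_le (P.lt_ts_idx P.a) (P.mono.monotone h)

lemma Setup.a_lt_ts_n₀ : P.a < P.ts P.n₀ := P.lt_ts_idx P.a

lemma Setup.ts_lt_a {j : ℕ} (h : j < P.n₀) : P.ts j < P.a :=
  lt_of_le_of_ne (P.ts_le_of_lt_idx h) (fun he => P.ha ⟨j, he⟩)

noncomputable def Setup.S : Set ℝ := Set.Ici P.a \ Set.range P.ts

lemma Setup.n₀_le_idx {x : ℝ} (hx : P.a ≤ x) : P.n₀ ≤ P.idx x := by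
  rw [← P.a_lt_iff]
  exact lt_of_le_of_lt hx (P.lt_ts_idx x)

noncomputable def Setup.dat (P : Setup) : ℕ → ℝ × (ℂ × ℂ)
  | 0 => (P.a, (P.c₀, P.c₁))
  | k+1 =>
      (P.ts (P.n₀ + k),
        (((Real.sqrt (P.bs (P.n₀ + k)) : ℝ) : ℂ) * sol P.z (Setup.dat P k).1 (Setup.dat P k).2 (P.ts (P.n₀ + k)),
         sol' P.z (Setup.dat P k).1 (Setup.dat P k).2 (P.ts (P.n₀ + k)) / ((Real.sqrt (P.bs (P.n₀ + k)) : ℝ) : ℂ)))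

noncomputable def Setup.U (x : ℝ) : ℂ :=
  sol P.z (P.dat (P.idx x - P.n₀)).1 (P.dat (P.idx x - P.n₀)).2 x

noncomputable def Setup.V (x : ℝ) : ℂ :=
  sol' P.z (P.dat (P.idx x - P.n₀)).1 (P.dat (P.idx x - P.n₀)).2 x

lemma Setup.exists_nbhd {x : ℝ} (hx : x ∉ Set.range P.ts) :
    ∃ O : Set ℝ, IsOpen O ∧ x ∈ O ∧ (∀ y ∈ O, P.idx y = P.idx x) ∧
      ∀ y ∈ O, y ∉ Set.range P.ts := by
  cases hm : P.idx x with
  | zero =>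
      refine ⟨Set.Iio (P.ts 0), isOpen_Iio, ?_, ?_, ?_⟩
      · have := P.lt_ts_idx x; rwa [hm] at this
      · intro y hy
        exact P.idx_eq hy (fun j hj => absurd hj (Nat.not_lt_zero j))
      · rintro y hy ⟨j, rfl⟩
        exact absurd hy (not_lt.2 (P.mono.monotone (Nat.zero_le j)))
  | succ m =>
      have h1 : P.ts m < x := by
        have hle : P.ts m ≤ x := P.ts_le_of_lt_idx (by rw [hm]; exact Nat.lt_succ_self m)
        rcases eq_or_lt_of_le hle with he | h
        · exact absurd ⟨m, he⟩ hx
        · exact h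
      have h2 : x < P.ts (m+1) := by have := P.lt_ts_idx x; rwa [hm] at this
      refine ⟨Set.Ioo (P.ts m) (P.ts (m+1)), isOpen_Ioo, ⟨h1, h2⟩, ?_, ?_⟩
      · intro y hy
        exact P.idx_eq hy.2 (fun j hj => le_trans (P.mono.monotone (Nat.lt_succ_iff.1 hj)) hy.1.le)
      · rintro y hy ⟨j, rfl⟩
        have ha1 := P.mono.lt_iff_lt.1 hy.1
        have ha2 := P.mono.lt_iff_lt.1 hy.2
        omega

lemma Setup.localize {x : ℝ} (hx : x ∈ P.S) :
    ∃ O : Set ℝ, IsOpen O ∧ x ∈ O ∧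
      (∀ y ∈ O, P.U y = sol P.z (P.dat (P.idx x - P.n₀)).1 (P.dat (P.idx x - P.n₀)).2 y) ∧
      (∀ y ∈ O, P.V y = sol' P.z (P.dat (P.idx x - P.n₀)).1 (P.dat (P.idx x - P.n₀)).2 y) ∧
      (∀ y ∈ O, P.a < y → y ∈ P.S) ∧ (∀ y ∈ O, y ∉ Set.range P.ts) := by
  obtain ⟨O, hO, hxO, hidx, hatom⟩ := P.exists_nbhd hx.2
  refine ⟨O, hO, hxO, ?_, ?_, fun y hy hay => ⟨hay.le, hatom y hy⟩, hatom⟩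
  · intro y hy
    show sol P.z (P.dat (P.idx y - P.n₀)).1 (P.dat (P.idx y - P.n₀)).2 y = _
    rw [hidx y hy]
  · intro y hy
    show sol' P.z (P.dat (P.idx y - P.n₀)).1 (P.dat (P.idx y - P.n₀)).2 y = _
    rw [hidx y hy]

lemma Setup.S_mem_nhds {x : ℝ} (hx : x ∈ P.S) (hax : P.a < x) : P.S ∈ 𝓝 x := by
  obtain ⟨O, hO, hxO, -, -, hsub, -⟩ := P.localize hx
  exact mem_of_superset ((hO.inter isOpen_Ioi).mem_nhds ⟨hxO, hax⟩)
    (fun y hy => hsub y hy.1 hy.2)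

lemma Setup.Ico_subset_S : Set.Ico P.a (P.ts P.n₀) ⊆ P.S := by
  rintro y ⟨h1, h2⟩
  refine ⟨h1, ?_⟩
  rintro ⟨j, rfl⟩
  rcases lt_or_ge j P.n₀ with h | h
  · exact absurd (P.ts_lt_a h) (not_lt.2 h1)
  · exact absurd (P.mono.monotone h) (not_le.2 h2)

lemma Setup.uniqueDiffOn_S : UniqueDiffOn ℝ P.S := by
  intro x hx
  rcases eq_or_lt_of_le (Set.mem_Ici.1 hx.1) with he | hax
  · refine (uniqueDiffWithinAt_convex (convex_Ico P.a (P.ts P.n₀)) ?_ ?_).mono P.Ico_subset_S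
    · rw [interior_Ico]
      exact nonempty_Ioo.2 P.a_lt_ts_n₀
    · rw [← he]
      exact subset_closure (left_mem_Ico.2 P.a_lt_ts_n₀)
  · exact uniqueDiffWithinAt_of_mem_nhds (P.S_mem_nhds hx hax)

lemma Setup.U_hasDerivAt {x : ℝ} (hx : x ∈ P.S) : HasDerivAt P.U (P.V x) x := by
  obtain ⟨O, hO, hxO, hU, hV, -, -⟩ := P.localize hx
  have h := hasDerivAt_sol P.z (P.dat (P.idx x - P.n₀)).1 (P.dat (P.idx x - P.n₀)).2 x
  rw [hV x hxO]
  exact h.congr_of_eventuallyEq (eventuallyEq_of_mem (hO.mem_nhds hxO) hU)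

lemma Setup.V_hasDerivAt {x : ℝ} (hx : x ∈ P.S) : HasDerivAt P.V (-P.z * P.U x) x := by
  obtain ⟨O, hO, hxO, hU, hV, -, -⟩ := P.localize hx
  have h := hasDerivAt_sol' P.z (P.dat (P.idx x - P.n₀)).1 (P.dat (P.idx x - P.n₀)).2 x
  rw [hU x hxO]
  exact h.congr_of_eventuallyEq (eventuallyEq_of_mem (hO.mem_nhds hxO) hV)

lemma Setup.U_contDiffOn : ContDiffOn ℝ 2 P.U P.S := by
  intro x hx
  obtain ⟨O, hO, hxO, hU, -, -, -⟩ := P.localize hx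
  exact (((contDiff_sol P.z _ _).contDiffAt).congr_of_eventuallyEq
    (eventuallyEq_of_mem (hO.mem_nhds hxO) hU)).contDiffWithinAt

lemma Setup.derivWithin_U {x : ℝ} (hx : x ∈ P.S) : derivWithin P.U P.S x = P.V x :=
  (P.U_hasDerivAt hx).hasDerivWithinAt.derivWithin (P.uniqueDiffOn_S x hx)

lemma Setup.deriv2_U {x : ℝ} (hx : x ∈ P.S) :
    derivWithin (derivWithin P.U P.S) P.S x = -P.z * P.U x := by
  rw [derivWithin_congr (fun y hy => P.derivWithin_U hy) (P.derivWithin_U hx)]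
  exact (P.V_hasDerivAt hx).hasDerivWithinAt.derivWithin (P.uniqueDiffOn_S x hx)

lemma Setup.left_piece {n : ℕ} (hn : P.a < P.ts n) :
    max P.a (P.ts n - P.γ) < P.ts n ∧
    ∀ y ∈ Set.Ioo (max P.a (P.ts n - P.γ)) (P.ts n), y ∈ P.S ∧ P.idx y = n := by
  have hγ := P.hγ
  constructor
  · exact max_lt hn (by linarith)
  · rintro y ⟨h1, h2⟩
    have hay : P.a < y := lt_of_le_of_lt (le_max_left _ _) h1
    have hγy : P.ts n - P.γ < y := lt_of_le_of_lt (le_max_right _ _) h1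
    have hts : ∀ j, j < n → P.ts j ≤ P.ts n - P.γ := by
      intro j hj
      have hg := P.hgap j
      have h3 : P.ts (j+1) ≤ P.ts n := P.mono.monotone hj
      linarith
    have hidx : P.idx y = n := P.idx_eq h2 (fun j hj => le_trans (hts j hj) hγy.le)
    refine ⟨⟨hay.le, ?_⟩, hidx⟩
    rintro ⟨j, rfl⟩
    rcases lt_or_ge j n with h | h
    · have := hts j h
      linarith
    · exact absurd (P.mono.monotone h) (not_le.2 h2)

lemma Setup.right_piece (n : ℕ) :
    ∀ y ∈ Set.Ioo (P.ts n) (P.ts (n+1)), (P.a < P.ts n → y ∈ P.S) ∧ P.idx y = n + 1 := by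
  rintro y ⟨h1, h2⟩
  have hidx : P.idx y = n + 1 :=
    P.idx_eq h2 (fun j hj => le_trans (P.mono.monotone (Nat.lt_succ_iff.1 hj)) h1.le)
  refine ⟨fun han => ⟨(han.trans h1).le, ?_⟩, hidx⟩
  rintro ⟨j, rfl⟩
  rcases lt_or_ge j (n+1) with h | h
  · exact absurd (P.mono.monotone (Nat.lt_succ_iff.1 h)) (not_le.2 h1)
  · exact absurd (P.mono.monotone h) (not_le.2 h2)

lemma Setup.U_interface {n : ℕ} (hn : P.a < P.ts n) :
    InterfaceAt P.ts P.bs P.S P.U n := by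
  have hn0 : P.n₀ ≤ n := (P.a_lt_iff n).1 hn
  have hnk : P.n₀ + (n - P.n₀) = n := by omega
  set k := n - P.n₀ with hk
  set t := P.ts n with ht
  set p := (P.dat k).1 with hp
  set d := (P.dat k).2 with hd
  set l := max P.a (t - P.γ) with hl
  obtain ⟨hlt, hleft⟩ := P.left_piece hn
  have hUeq : ∀ y ∈ Set.Ioo l t, P.U y = sol P.z p d y := by
    intro y hy
    have h1 := (hleft y hy).2
    show sol P.z (P.dat (P.idx y - P.n₀)).1 (P.dat (P.idx y - P.n₀)).2 y = _
    rw [h1]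
  have hVeq : ∀ y ∈ Set.Ioo l t, P.V y = sol' P.z p d y := by
    intro y hy
    have h1 := (hleft y hy).2
    show sol' P.z (P.dat (P.idx y - P.n₀)).1 (P.dat (P.idx y - P.n₀)).2 y = _
    rw [h1]
  have hmemL : Set.Ioo l t ∈ 𝓝[P.S ∩ Set.Iio t] t :=
    mem_nhdsWithin.2 ⟨Set.Ioi l, isOpen_Ioi, hlt, fun y hy => ⟨hy.1, hy.2.2⟩⟩
  -- right side
  have htt' : t < P.ts (n+1) := P.mono (Nat.lt_succ_self n)
  have hUeqR : ∀ y ∈ Set.Ioo t (P.ts (n+1)), P.U y = sol P.z (P.dat (k+1)).1 (P.dat (k+1)).2 y := by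
    intro y hy
    have h1 := (P.right_piece n y hy).2
    show sol P.z (P.dat (P.idx y - P.n₀)).1 (P.dat (P.idx y - P.n₀)).2 y = _
    have h2 : n + 1 - P.n₀ = k + 1 := by omega
    rw [h1, h2]
  have hVeqR : ∀ y ∈ Set.Ioo t (P.ts (n+1)), P.V y = sol' P.z (P.dat (k+1)).1 (P.dat (k+1)).2 y := by
    intro y hy
    have h1 := (P.right_piece n y hy).2
    show sol' P.z (P.dat (P.idx y - P.n₀)).1 (P.dat (P.idx y - P.n₀)).2 y = _
    have h2 : n + 1 - P.n₀ = k + 1 := by omega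
    rw [h1, h2]
  have hmemR : Set.Ioo t (P.ts (n+1)) ∈ 𝓝[P.S ∩ Set.Ioi t] t :=
    mem_nhdsWithin.2 ⟨Set.Iio (P.ts (n+1)), isOpen_Iio, htt', fun y hy => ⟨hy.2.2, hy.1⟩⟩
  have hdat1 : (P.dat (k+1)).1 = t := by
    show P.ts (P.n₀ + k) = t
    rw [hnk]
  have hdat21 : (P.dat (k+1)).2.1 = ((Real.sqrt (P.bs n) : ℝ) : ℂ) * sol P.z p d t := by
    show ((Real.sqrt (P.bs (P.n₀ + k)) : ℝ) : ℂ) * sol P.z p d (P.ts (P.n₀ + k)) = _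
    rw [hnk]
  have hdat22 : (P.dat (k+1)).2.2 = sol' P.z p d t / ((Real.sqrt (P.bs n) : ℝ) : ℂ) := by
    show sol' P.z p d (P.ts (P.n₀ + k)) / ((Real.sqrt (P.bs (P.n₀ + k)) : ℝ) : ℂ) = _
    rw [hnk]
  refine ⟨sol P.z p d t, ((Real.sqrt (P.bs n) : ℝ) : ℂ) * sol P.z p d t,
    sol' P.z p d t, sol' P.z p d t / ((Real.sqrt (P.bs n) : ℝ) : ℂ), ?_, ?_, ?_, ?_, rfl, rfl⟩
  · refine Tendsto.congr' (eventually_of_mem hmemL (fun y hy => (hUeq y hy).symm)) ?_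
    exact ((contDiff_sol P.z p d).continuous.tendsto t).mono_left nhdsWithin_le_nhds
  · refine Tendsto.congr' (eventually_of_mem hmemR (fun y hy => (hUeqR y hy).symm)) ?_
    have hc := ((contDiff_sol P.z (P.dat (k+1)).1 (P.dat (k+1)).2).continuous.tendsto t).mono_left
      (nhdsWithin_le_nhds (s := P.S ∩ Set.Ioi t))
    have hval : sol P.z (P.dat (k+1)).1 (P.dat (k+1)).2 t = ((Real.sqrt (P.bs n) : ℝ) : ℂ) * sol P.z p d t := by
      rw [← hdat21]
      conv_lhs => rw [← hdat1]
      exact sol_at _ _ _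
    rwa [hval] at hc
  · have hVW : ∀ y ∈ P.S ∩ Set.Iio t, derivWithin P.U P.S y = P.V y :=
      fun y hy => P.derivWithin_U hy.1
    refine Tendsto.congr' ?_ (((contDiff_sol' P.z p d).continuous.tendsto t).mono_left nhdsWithin_le_nhds)
    have h1 : ∀ᶠ y in 𝓝[P.S ∩ Set.Iio t] t, P.V y = sol' P.z p d y :=
      eventually_of_mem hmemL (fun y hy => hVeq y hy)
    have h2 : ∀ᶠ y in 𝓝[P.S ∩ Set.Iio t] t, derivWithin P.U P.S y = P.V y :=
      eventually_nhdsWithin_of_forall hVW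
    filter_upwards [h1, h2] with y hy1 hy2
    rw [hy2, hy1]
  · have hVW : ∀ y ∈ P.S ∩ Set.Ioi t, derivWithin P.U P.S y = P.V y :=
      fun y hy => P.derivWithin_U hy.1
    have hc := ((contDiff_sol' P.z (P.dat (k+1)).1 (P.dat (k+1)).2).continuous.tendsto t).mono_left
      (nhdsWithin_le_nhds (s := P.S ∩ Set.Ioi t))
    have hval : sol' P.z (P.dat (k+1)).1 (P.dat (k+1)).2 t = sol' P.z p d t / ((Real.sqrt (P.bs n) : ℝ) : ℂ) := by
      rw [← hdat22]
      conv_lhs => rw [← hdat1]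
      exact sol'_at _ _ _
    rw [hval] at hc
    refine Tendsto.congr' ?_ hc
    have h1 : ∀ᶠ y in 𝓝[P.S ∩ Set.Ioi t] t, P.V y = sol' P.z (P.dat (k+1)).1 (P.dat (k+1)).2 y :=
      eventually_of_mem hmemR (fun y hy => hVeqR y hy)
    have h2 : ∀ᶠ y in 𝓝[P.S ∩ Set.Ioi t] t, derivWithin P.U P.S y = P.V y :=
      eventually_nhdsWithin_of_forall hVW
    filter_upwards [h1, h2] with y hy1 hy2
    rw [hy2, hy1]

lemma Setup.U_at_a : P.U P.a = P.c₀ := by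
  have h0 : P.idx P.a - P.n₀ = 0 := Nat.sub_self _
  show sol P.z (P.dat (P.idx P.a - P.n₀)).1 (P.dat (P.idx P.a - P.n₀)).2 P.a = P.c₀
  rw [h0]
  exact sol_at _ _ _

lemma Setup.a_mem_S : P.a ∈ P.S := ⟨Set.self_mem_Ici, P.ha⟩

lemma Setup.V_at_a : P.V P.a = P.c₁ := by
  have h0 : P.idx P.a - P.n₀ = 0 := Nat.sub_self _
  show sol' P.z (P.dat (P.idx P.a - P.n₀)).1 (P.dat (P.idx P.a - P.n₀)).2 P.a = P.c₁
  rw [h0]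
  exact sol'_at _ _ _


lemma Setup.pair_hasDerivWithinAt {u : ℝ → ℂ}
    (h1 : ContDiffOn ℝ 2 u P.S)
    (h2 : ∀ x ∈ P.S, -(derivWithin (derivWithin u P.S) P.S x) = P.z * u x)
    {x : ℝ} (hx : x ∈ P.S) :
    HasDerivWithinAt (fun y => (u y, derivWithin u P.S y))
      (Amap P.z (u x, derivWithin u P.S x)) P.S x := by
  have du : HasDerivWithinAt u (derivWithin u P.S x) P.S x :=
    ((h1.differentiableOn (by norm_num)) x hx).hasDerivWithinAt
  have hD : ContDiffOn ℝ 1 (derivWithin u P.S) P.S :=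
    h1.derivWithin P.uniqueDiffOn_S (by norm_num)
  have heq : derivWithin (derivWithin u P.S) P.S x = -(P.z * u x) :=
    neg_eq_iff_eq_neg.1 (h2 x hx)
  have du2 : HasDerivWithinAt (derivWithin u P.S) (-(P.z * u x)) P.S x := by
    have h4 := ((hD.differentiableOn (by norm_num)) x hx).hasDerivWithinAt
    rwa [heq] at h4
  have h5 := du.prodMk du2
  simpa [Amap, neg_mul] using h5

lemma Setup.S_mem_nhdsWithin_Ici : P.S ∈ 𝓝[Set.Ici P.a] P.a :=
  mem_nhdsWithin.2 ⟨Set.Iio (P.ts P.n₀), isOpen_Iio, P.a_lt_ts_n₀,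
    fun y hy => P.Ico_subset_S ⟨hy.2, hy.1⟩⟩

end InterfaceIVP

/-- existence and uniqueness for the interface initial value problem:
for any `z ∈ ℂ`, `a ∉ {tₙ}` and `c₀, c₁ ∈ ℂ` there is exactly one solution `u` of the
interface equation `-u'' = z u` on `[a, ∞)` with `u(a) = c₀`, `u'(a) = c₁` (uniqueness
holds off the atoms, where the equation constrains `u`). -/
theorem interface_ivp_exists_unique
    (ts bs : ℕ → ℝ) (γ : ℝ) (hγ : 0 < γ)
    (ht_mono : StrictMono ts) (hgap : ∀ n, γ ≤ ts (n + 1) - ts n)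
    (hbs : ∀ n, 1 < bs n)
    (z : ℂ) (a : ℝ) (ha : a ∉ Set.range ts) (c₀ c₁ : ℂ) :
    (∃ u : ℝ → ℂ, IsInterfaceSolution ts bs z (Ici a) u ∧
        u a = c₀ ∧ derivWithin u (offAtoms ts (Ici a)) a = c₁) ∧
    (∀ u v : ℝ → ℂ,
        (IsInterfaceSolution ts bs z (Ici a) u ∧
          u a = c₀ ∧ derivWithin u (offAtoms ts (Ici a)) a = c₁) →
        (IsInterfaceSolution ts bs z (Ici a) v ∧
          v a = c₀ ∧ derivWithin v (offAtoms ts (Ici a)) a = c₁) →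
        Set.EqOn u v (offAtoms ts (Ici a))) := by
  let P : InterfaceIVP.Setup := ⟨ts, bs, γ, z, a, c₀, c₁, hγ, ht_mono, hgap, ha⟩
  constructor
  · refine ⟨P.U, ⟨P.U_contDiffOn, ?_, ?_⟩, P.U_at_a, ?_⟩
    · intro x hx
      have h : derivWithin (derivWithin P.U (offAtoms ts (Ici a))) (offAtoms ts (Ici a)) x
          = -z * P.U x := P.deriv2_U hx
      rw [h]; ring
    · intro n hn
      rw [interior_Ici] at hn
      exact P.U_interface hn
    · have h : derivWithin P.U (offAtoms ts (Ici a)) a = P.V a :=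
        P.derivWithin_U P.a_mem_S
      rw [h]
      exact P.V_at_a
  · rintro u v ⟨⟨hu1, hu2, hu3⟩, hua, hua'⟩ ⟨⟨hv1, hv2, hv3⟩, hva, hva'⟩
    have hu1' : ContDiffOn ℝ 2 u P.S := hu1
    have hv1' : ContDiffOn ℝ 2 v P.S := hv1
    have hu2' : ∀ x ∈ P.S, -(derivWithin (derivWithin u P.S) P.S x) = P.z * u x := hu2
    have hv2' : ∀ x ∈ P.S, -(derivWithin (derivWithin v P.S) P.S x) = P.z * v x := hv2
    have hu3' : ∀ n, P.ts n ∈ interior (Set.Ici P.a) → InterfaceAt P.ts P.bs P.S u n := hu3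
    have hv3' : ∀ n, P.ts n ∈ interior (Set.Ici P.a) → InterfaceAt P.ts P.bs P.S v n := hv3
    have hua'' : derivWithin u P.S P.a = c₁ := hua'
    have hva'' : derivWithin v P.S P.a = c₁ := hva'
    set h : ℝ → ℂ × ℂ :=
      fun y => (u y - v y, derivWithin u P.S y - derivWithin v P.S y) with hhdef
    have hderiv : ∀ x ∈ P.S, P.S ∈ 𝓝 x → HasDerivAt h (InterfaceIVP.Amap P.z (h x)) x := by
      intro x hx hmem
      have h1 := ((P.pair_hasDerivWithinAt hu1' hu2' hx).hasDerivAt hmem).sub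
        ((P.pair_hasDerivWithinAt hv1' hv2' hx).hasDerivAt hmem)
      have h2 : HasDerivAt h
          (InterfaceIVP.Amap P.z (u x, derivWithin u P.S x)
            - InterfaceIVP.Amap P.z (v x, derivWithin v P.S x)) x := h1
      rwa [InterfaceIVP.Amap_sub] at h2
    have huderiv0 : HasDerivWithinAt h (InterfaceIVP.Amap P.z (h P.a)) (Set.Ici P.a) P.a := by
      have h1 := ((P.pair_hasDerivWithinAt hu1' hu2' P.a_mem_S).mono_of_mem_nhdsWithin
          P.S_mem_nhdsWithin_Ici).sub
        ((P.pair_hasDerivWithinAt hv1' hv2' P.a_mem_S).mono_of_mem_nhdsWithin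
          P.S_mem_nhdsWithin_Ici)
      have h2 : HasDerivWithinAt h
          (InterfaceIVP.Amap P.z (u P.a, derivWithin u P.S P.a)
            - InterfaceIVP.Amap P.z (v P.a, derivWithin v P.S P.a)) (Set.Ici P.a) P.a := h1
      rwa [InterfaceIVP.Amap_sub] at h2
    have h0 : h P.a = 0 := by
      simp only [hhdef, hua, hva, hua'', hva'']
      simp [Prod.ext_iff, show u P.a = c₀ from hua, show v P.a = c₀ from hva]
    have main : ∀ k, ∀ x ∈ P.S ∩ Set.Iio (P.ts (P.n₀ + k)),
        u x = v x ∧ derivWithin u P.S x = derivWithin v P.S x := by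
      intro k
      induction k with
      | zero =>
        intro x hx
        have hx' : x ∈ Set.Ico P.a (P.ts P.n₀) := by
          refine ⟨hx.1.1, ?_⟩
          have h5 := hx.2
          rwa [Nat.add_zero] at h5
        have hd : ∀ y ∈ Set.Ioo P.a (P.ts P.n₀), HasDerivAt h (InterfaceIVP.Amap P.z (h y)) y :=
          fun y hy => hderiv y (P.Ico_subset_S (Set.Ioo_subset_Ico_self hy))
            (mem_of_superset (isOpen_Ioo.mem_nhds hy)
              (fun w hw => P.Ico_subset_S (Set.Ioo_subset_Ico_self hw)))
        have hz := InterfaceIVP.eq_zero_of_ivp_zero huderiv0 hd h0 x hx'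
        have hz2 : u x - v x = 0 ∧ derivWithin u P.S x - derivWithin v P.S x = 0 := by
          simpa [hhdef, Prod.ext_iff] using hz
        exact ⟨sub_eq_zero.1 hz2.1, sub_eq_zero.1 hz2.2⟩
      | succ k ih =>
        have hatn : P.a < P.ts (P.n₀ + k) := (P.a_lt_iff _).2 (Nat.le_add_right _ _)
        obtain ⟨uL, uR, duL, duR, huL, huR, hduL, hduR, huRe, hduRe⟩ :=
          hu3' (P.n₀ + k) (by rw [interior_Ici]; exact hatn)
        obtain ⟨vL, vR, dvL, dvR, hvL, hvR, hdvL, hdvR, hvRe, hdvRe⟩ :=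
          hv3' (P.n₀ + k) (by rw [interior_Ici]; exact hatn)
        obtain ⟨hlt, hleft⟩ := P.left_piece hatn
        haveI hne : (𝓝[P.S ∩ Set.Iio (P.ts (P.n₀ + k))] (P.ts (P.n₀ + k))).NeBot := by
          have h1 : (𝓝[Set.Ioo (max P.a (P.ts (P.n₀ + k) - P.γ)) (P.ts (P.n₀ + k))]
              (P.ts (P.n₀ + k))).NeBot := by
            rw [← mem_closure_iff_nhdsWithin_neBot, closure_Ioo hlt.ne]
            exact ⟨hlt.le, le_refl _⟩
          exact h1.mono (nhdsWithin_mono _ (fun y hy => ⟨(hleft y hy).1, hy.2⟩))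
        have hueq : u =ᶠ[𝓝[P.S ∩ Set.Iio (P.ts (P.n₀ + k))] (P.ts (P.n₀ + k))] v :=
          eventually_nhdsWithin_of_forall (fun y hy => (ih y hy).1)
        have hdueq : derivWithin u P.S
            =ᶠ[𝓝[P.S ∩ Set.Iio (P.ts (P.n₀ + k))] (P.ts (P.n₀ + k))] derivWithin v P.S :=
          eventually_nhdsWithin_of_forall (fun y hy => (ih y hy).2)
        have hLe : uL = vL := tendsto_nhds_unique (huL.congr' hueq) hvL
        have hdLe : duL = dvL := tendsto_nhds_unique (hduL.congr' hdueq) hdvL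
        have hRe : uR = vR := by rw [huRe, hvRe, hLe]
        have hdRe2 : duR = dvR := by rw [hduRe, hdvRe, hdLe]
        have htt' : P.ts (P.n₀ + k) < P.ts (P.n₀ + k + 1) := P.mono (Nat.lt_succ_self _)
        have hIooS : Set.Ioo (P.ts (P.n₀ + k)) (P.ts (P.n₀ + k + 1)) ⊆ P.S :=
          fun y hy => (P.right_piece _ y hy).1 hatn
        have hsub2 : Set.Ioo (P.ts (P.n₀ + k)) (P.ts (P.n₀ + k + 1))
            ⊆ P.S ∩ Set.Ioi (P.ts (P.n₀ + k)) := fun y hy => ⟨hIooS hy, hy.1⟩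
        have htend : Tendsto h
            (𝓝[Set.Ioo (P.ts (P.n₀ + k)) (P.ts (P.n₀ + k + 1))] (P.ts (P.n₀ + k))) (𝓝 0) := by
          have h1 := (huR.sub hvR).prodMk_nhds (hduR.sub hdvR)
          have h2 := h1.mono_left (nhdsWithin_mono _ hsub2)
          have h4 : (uR - vR, duR - dvR) = (0 : ℂ × ℂ) := by
            rw [hRe, hdRe2]; simp
          rwa [h4] at h2
        have hd : ∀ y ∈ Set.Ioo (P.ts (P.n₀ + k)) (P.ts (P.n₀ + k + 1)),
            HasDerivAt h (InterfaceIVP.Amap P.z (h y)) y :=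
          fun y hy => hderiv y (hIooS hy)
            (mem_of_superset (isOpen_Ioo.mem_nhds hy) hIooS)
        have hzero := InterfaceIVP.eq_zero_of_limit_zero htt' hd htend
        intro x hx
        rcases lt_trichotomy x (P.ts (P.n₀ + k)) with hlt2 | heq2 | hgt2
        · exact ih x ⟨hx.1, hlt2⟩
        · exact absurd ⟨P.n₀ + k, heq2.symm⟩ hx.1.2
        · have hx2 : x ∈ Set.Ioo (P.ts (P.n₀ + k)) (P.ts (P.n₀ + k + 1)) := ⟨hgt2, hx.2⟩
          have hz := hzero x hx2
          have hz2 : u x - v x = 0 ∧ derivWithin u P.S x - derivWithin v P.S x = 0 := by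
            simpa [hhdef, Prod.ext_iff] using hz
          exact ⟨sub_eq_zero.1 hz2.1, sub_eq_zero.1 hz2.2⟩
    intro x hx
    obtain ⟨m, hm⟩ := P.unbounded x
    exact (main m x ⟨hx, lt_of_lt_of_le hm (P.mono.monotone (Nat.le_add_left m P.n₀))⟩).1
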